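/- Let F : [0,1]^n → ℝ be a differentiable DR-submodular function. Then for all x, y ∈ [0,1]^n, ⟨∇F(x), y − x⟩ ≥ F(x ∨ y) + F(x ∧ y) − 2F(x), where ∨ and ∧ denote the coordinatewise maximum and minimum respectively. -/

import Mathlib

/-- The harmonic number `H j = ∑_{k=1}^j 1/k` (with `H 0 = 0`). -/
noncomputable def harmonicNum (j : ℕ) : ℝ := ∑ k ∈ Finset.range j, (1 : ℝ) / (k + 1)

/-- `H_{2,j} = ∑_{k=1}^j 1/k²`. -/
noncomputable def harmonicNum2 (j : ℕ) : ℝ := ∑ k ∈ Finset.range j, (1 : ℝ) / ((k : ℝ) + 1) ^ 2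

/-- The time values `t_j = 1/(1 - ln(1 + H_j/H_T)) - 1` of the Frank–Wolfe algorithm. -/
noncomputable def fwTime (T j : ℕ) : ℝ :=
  1 / (1 - Real.log (1 + harmonicNum j / harmonicNum T)) - 1

/-- The Frank–Wolfe step ratio `e^{-1/(1+t_j) + 1/(1+t_{j+1})}`. -/
noncomputable def fwRatio (T j : ℕ) : ℝ :=
  Real.exp (-(1 / (1 + fwTime T j)) + 1 / (1 + fwTime T (j + 1)))

/-- `√a_{t_j} = e^{t_j/(1+t_j)}`. -/
noncomputable def fwSqa (T j : ℕ) : ℝ := Real.exp (fwTime T j / (1 + fwTime T j))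

/-- `F : [0,1]^n → ℝ` is DR-submodular: for all `x ≤ y` in `[0,1]^n`, coordinates `i` and
`a > 0` with `x + a·e_i, y + a·e_i ∈ [0,1]^n`, one has
`F(x + a·e_i) - F(x) ≥ F(y + a·e_i) - F(y)`. -/
def DRSubmodular {n : ℕ} (F : (Fin n → ℝ) → ℝ) : Prop :=
  ∀ x y : Fin n → ℝ, x ∈ Set.Icc (0 : Fin n → ℝ) 1 → y ∈ Set.Icc (0 : Fin n → ℝ) 1 →
    x ≤ y → ∀ i : Fin n, ∀ a : ℝ, 0 < a →
      x + a • (Pi.single i 1 : Fin n → ℝ) ∈ Set.Icc (0 : Fin n → ℝ) 1 →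
      y + a • (Pi.single i 1 : Fin n → ℝ) ∈ Set.Icc (0 : Fin n → ℝ) 1 →
      F (y + a • (Pi.single i 1 : Fin n → ℝ)) - F y ≤
        F (x + a • (Pi.single i 1 : Fin n → ℝ)) - F x

/-- The continuous linear map `y ↦ ⟨g, y⟩ = ∑ i, g i * y i` on `ℝⁿ`. -/
noncomputable def gradCLM {n : ℕ} (g : Fin n → ℝ) : (Fin n → ℝ) →L[ℝ] ℝ :=
  ∑ i, g i • (ContinuousLinearMap.proj i : (Fin n → ℝ) →L[ℝ] ℝ)

/-- `gradF` is the gradient of `F` on the box `[0,1]^n`: at each point of the box, `F` is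
differentiable within the box with derivative `y ↦ ⟨gradF z, y⟩`. -/
def HasGradientOnBox {n : ℕ} (F : (Fin n → ℝ) → ℝ) (gradF : (Fin n → ℝ) → Fin n → ℝ) : Prop :=
  ∀ z ∈ Set.Icc (0 : Fin n → ℝ) 1, HasFDerivWithinAt F (gradCLM (gradF z)) (Set.Icc 0 1) z

lemma gradCLM_apply {n : ℕ} (g v : Fin n → ℝ) : gradCLM g v = ∑ i, g i * v i := by
  simp [gradCLM, ContinuousLinearMap.sum_apply]


lemma gradCLM_single {n : ℕ} (g : Fin n → ℝ) (i : Fin n) :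
    gradCLM g (Pi.single i 1) = g i := by
  rw [gradCLM_apply]
  rw [Finset.sum_eq_single i]
  · simp
  · intro j _ hj; simp [Pi.single_apply, hj]
  · simp


lemma mem_box_add_single {n : ℕ} {z : Fin n → ℝ} (hz : z ∈ Set.Icc (0 : Fin n → ℝ) 1)
    {i : Fin n} {a : ℝ} (h0 : 0 ≤ z i + a) (h1 : z i + a ≤ 1) :
    z + a • (Pi.single i 1 : Fin n → ℝ) ∈ Set.Icc (0 : Fin n → ℝ) 1 := by
  simp only [Set.mem_Icc, Pi.le_def] at hz ⊢
  constructor <;> intro j <;> rcases eq_or_ne j i with h | h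
  · subst h; simpa using h0
  · simpa [Pi.single_apply, h] using hz.1 j
  · subst h; simpa using h1
  · simpa [Pi.single_apply, h] using hz.2 j


lemma tendsto_slope_partial {n : ℕ} {F : (Fin n → ℝ) → ℝ} {gradF : (Fin n → ℝ) → Fin n → ℝ}
    (hgrad : HasGradientOnBox F gradF) {z : Fin n → ℝ} (hz : z ∈ Set.Icc (0 : Fin n → ℝ) 1)
    (i : Fin n) :
    HasDerivWithinAt (fun a : ℝ => F (z + a • (Pi.single i 1 : Fin n → ℝ))) (gradF z i)
      (Set.Icc (-z i) (1 - z i)) 0 := by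
  have hline : HasDerivWithinAt (fun a : ℝ => z + a • (Pi.single i 1 : Fin n → ℝ))
      (Pi.single i 1) (Set.Icc (-z i) (1 - z i)) 0 := by
    have h1 : HasDerivAt (fun a : ℝ => a • (Pi.single i 1 : Fin n → ℝ)) (Pi.single i 1) 0 := by
      simpa using (hasDerivAt_id (0:ℝ)).smul_const (Pi.single i 1 : Fin n → ℝ)
    exact ((h1.const_add z)).hasDerivWithinAt
  have hmaps : Set.MapsTo (fun a : ℝ => z + a • (Pi.single i 1 : Fin n → ℝ))
      (Set.Icc (-z i) (1 - z i)) (Set.Icc (0 : Fin n → ℝ) 1) := by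
    intro a ha
    exact mem_box_add_single hz (by linarith [ha.1]) (by linarith [ha.2])
  have hF : HasFDerivWithinAt F (gradCLM (gradF z)) (Set.Icc 0 1)
      (z + (0:ℝ) • (Pi.single i 1 : Fin n → ℝ)) := by simpa using hgrad z hz
  have hcomp := hF.comp_hasDerivWithinAt (0:ℝ)
      (by simpa using hline : HasDerivWithinAt (fun a : ℝ => z + a • (Pi.single i 1 : Fin n → ℝ))
        (Pi.single i 1) (Set.Icc (-z i) (1 - z i)) 0) (by simpa using hmaps)
  simpa [gradCLM_single, Function.comp_def] using hcomp

/-- Monotonicity of partial derivatives of a DR-submodular function. -/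

lemma grad_antitone {n : ℕ} {F : (Fin n → ℝ) → ℝ} {gradF : (Fin n → ℝ) → Fin n → ℝ}
    (hgrad : HasGradientOnBox F gradF) (hDR : DRSubmodular F)
    {z z' : Fin n → ℝ} (hz : z ∈ Set.Icc (0 : Fin n → ℝ) 1)
    (hz' : z' ∈ Set.Icc (0 : Fin n → ℝ) 1) (hle : z ≤ z') (i : Fin n)
    (hcase : z' i < 1 ∨ 0 < z i) : gradF z' i ≤ gradF z i := by
  have hz01 : (0:ℝ) ≤ z i ∧ z i ≤ 1 := ⟨by simpa using hz.1 i, by simpa using hz.2 i⟩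
  have hz'01 : (0:ℝ) ≤ z' i ∧ z' i ≤ 1 := ⟨by simpa using hz'.1 i, by simpa using hz'.2 i⟩
  have hzi : z i ≤ z' i := hle i
  have hT := (hasDerivWithinAt_iff_tendsto_slope).1 (tendsto_slope_partial hgrad hz i)
  have hT' := (hasDerivWithinAt_iff_tendsto_slope).1 (tendsto_slope_partial hgrad hz' i)
  rcases hcase with h1 | h0
  · -- use right slopes on Ioo 0 ε, ε = 1 - z' i
    set ε := 1 - z' i with hε
    have hεpos : 0 < ε := by linarith
    have hsub : Set.Ioo (0:ℝ) ε ⊆ Set.Icc (-z i) (1 - z i) \ {0} := by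
      intro a ha
      exact ⟨⟨by linarith [ha.1], by linarith [ha.2]⟩, ne_of_gt ha.1⟩
    have hsub' : Set.Ioo (0:ℝ) ε ⊆ Set.Icc (-z' i) (1 - z' i) \ {0} := by
      intro a ha
      exact ⟨⟨by linarith [ha.1], le_of_lt ha.2⟩, ne_of_gt ha.1⟩
    have hne : (nhdsWithin (0:ℝ) (Set.Ioo 0 ε)).NeBot := by
      apply mem_closure_iff_nhdsWithin_neBot.1
      rw [closure_Ioo (ne_of_lt hεpos)]
      exact ⟨le_refl 0, le_of_lt hεpos⟩
    have hT2 := hT.mono_left (nhdsWithin_mono 0 hsub)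
    have hT2' := hT'.mono_left (nhdsWithin_mono 0 hsub')
    refine le_of_tendsto_of_tendsto hT2' hT2 ?_
    filter_upwards [self_mem_nhdsWithin] with a ha
    have hapos : 0 < a := ha.1
    have hDRa := hDR z z' hz hz' hle i a hapos
      (mem_box_add_single hz (by linarith) (by linarith [ha.2]))
      (mem_box_add_single hz' (by linarith) (by linarith [ha.2]))
    simp only [slope_def_field, div_eq_mul_inv]
    have : (F (z' + a • (Pi.single i 1 : Fin n → ℝ)) -
        F (z' + (0:ℝ) • (Pi.single i 1 : Fin n → ℝ))) / (a - 0) ≤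
        (F (z + a • (Pi.single i 1 : Fin n → ℝ)) -
        F (z + (0:ℝ) • (Pi.single i 1 : Fin n → ℝ))) / (a - 0) := by
      rw [sub_zero]
      apply div_le_div_of_nonneg_right ?_ (le_of_lt hapos) |>.trans_eq rfl
      simpa using hDRa
    simpa [slope_def_field, div_eq_mul_inv] using this
  · -- use left slopes on Ioo (-δ) 0, δ = z i
    set δ := z i with hδ
    have hsub : Set.Ioo (-δ) (0:ℝ) ⊆ Set.Icc (-z i) (1 - z i) \ {0} := by
      intro a ha
      exact ⟨⟨le_of_lt ha.1, by linarith [ha.2, hz01.2]⟩, ne_of_lt ha.2⟩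
    have hsub' : Set.Ioo (-δ) (0:ℝ) ⊆ Set.Icc (-z' i) (1 - z' i) \ {0} := by
      intro a ha
      exact ⟨⟨by linarith [ha.1], by linarith [ha.2, hz'01.2]⟩, ne_of_lt ha.2⟩
    have hne : (nhdsWithin (0:ℝ) (Set.Ioo (-δ) 0)).NeBot := by
      apply mem_closure_iff_nhdsWithin_neBot.1
      rw [closure_Ioo (by linarith : -δ ≠ 0)]
      exact ⟨by linarith, le_refl 0⟩
    have hT2 := hT.mono_left (nhdsWithin_mono 0 hsub)
    have hT2' := hT'.mono_left (nhdsWithin_mono 0 hsub')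
    refine le_of_tendsto_of_tendsto hT2' hT2 ?_
    filter_upwards [self_mem_nhdsWithin] with a ha
    have haneg : a < 0 := ha.2
    -- apply DR at base points z + a e_i ≤ z' + a e_i with step -a
    have hmemz : z + a • (Pi.single i 1 : Fin n → ℝ) ∈ Set.Icc (0 : Fin n → ℝ) 1 :=
      mem_box_add_single hz (by linarith [ha.1]) (by linarith [hz01.2])
    have hmemz' : z' + a • (Pi.single i 1 : Fin n → ℝ) ∈ Set.Icc (0 : Fin n → ℝ) 1 :=
      mem_box_add_single hz' (by linarith [ha.1, hzi]) (by linarith [hz'01.2])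
    have hle2 : z + a • (Pi.single i 1 : Fin n → ℝ) ≤ z' + a • (Pi.single i 1 : Fin n → ℝ) := by
      intro j
      simp only [Pi.add_apply]
      exact add_le_add_left (hle j) _
    have hcancel : ∀ w : Fin n → ℝ,
        w + a • (Pi.single i 1 : Fin n → ℝ) + (-a) • (Pi.single i 1 : Fin n → ℝ) = w := by
      intro w
      rw [add_assoc, ← add_smul]
      simp
    have hDRa := hDR _ _ hmemz hmemz' hle2 i (-a) (by linarith)
      (by rw [hcancel]; exact hz) (by rw [hcancel]; exact hz')
    rw [hcancel, hcancel] at hDRa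
    -- hDRa : F z' - F (z' + a e) ≤ F z - F (z + a e)
    have key : (F (z' + a • (Pi.single i 1 : Fin n → ℝ)) - F z') / a ≤
        (F (z + a • (Pi.single i 1 : Fin n → ℝ)) - F z) / a := by
      rw [div_le_div_right_of_neg haneg]
      linarith
    have hz0 : ∀ w : Fin n → ℝ, w + (0:ℝ) • (Pi.single i 1 : Fin n → ℝ) = w := by intro w; simp
    simpa [slope_def_field, hz0, div_eq_mul_inv] using key


lemma seg_mem_box {n : ℕ} {x w : Fin n → ℝ} (hx : x ∈ Set.Icc (0 : Fin n → ℝ) 1)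
    (hw : w ∈ Set.Icc (0 : Fin n → ℝ) 1) {t : ℝ} (ht : t ∈ Set.Icc (0:ℝ) 1) :
    x + t • (w - x) ∈ Set.Icc (0 : Fin n → ℝ) 1 := by
  have h := (convex_Icc (0 : Fin n → ℝ) 1) hx hw (by linarith [ht.2] : (0:ℝ) ≤ 1 - t) ht.1
    (by ring)
  have heq : (1 - t) • x + t • w = x + t • (w - x) := by
    rw [sub_smul, smul_sub]; module
  rwa [heq] at h


lemma seg_bound {n : ℕ} {F : (Fin n → ℝ) → ℝ} {gradF : (Fin n → ℝ) → Fin n → ℝ}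
    (hgrad : HasGradientOnBox F gradF) {x w : Fin n → ℝ}
    (hx : x ∈ Set.Icc (0 : Fin n → ℝ) 1) (hw : w ∈ Set.Icc (0 : Fin n → ℝ) 1)
    (hφ : ∀ t ∈ Set.Ico (0:ℝ) 1,
      ∑ i, gradF (x + t • (w - x)) i * (w i - x i) ≤ ∑ i, gradF x i * (w i - x i)) :
    F w - F x ≤ ∑ i, gradF x i * (w i - x i) := by
  set C := ∑ i, gradF x i * (w i - x i) with hC
  set γ : ℝ → Fin n → ℝ := fun t => x + t • (w - x) with hγ
  have hγd : ∀ t : ℝ, HasDerivAt γ (w - x) t := by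
    intro t
    exact (by simpa using ((hasDerivAt_id t).smul_const (w - x)) :
      HasDerivAt (fun s : ℝ => s • (w - x)) (w - x) t).const_add x
  have hmaps : Set.MapsTo γ (Set.Icc (0:ℝ) 1) (Set.Icc (0 : Fin n → ℝ) 1) :=
    fun t ht => seg_mem_box hx hw ht
  have hg : ∀ t ∈ Set.Icc (0:ℝ) 1, HasDerivWithinAt (fun s => F (γ s))
      (∑ i, gradF (γ t) i * (w i - x i)) (Set.Icc (0:ℝ) 1) t := by
    intro t ht
    have := (hgrad (γ t) (hmaps ht)).comp_hasDerivWithinAt t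
      ((hγd t).hasDerivWithinAt) hmaps
    simpa [gradCLM_apply, Pi.sub_apply, Function.comp_def] using this
  set ψ : ℝ → ℝ := fun t => F (γ t) - C * t with hψ
  have hant : AntitoneOn ψ (Set.Icc (0:ℝ) 1) := by
    apply antitoneOn_of_deriv_nonpos (convex_Icc 0 1)
    · intro t ht
      exact ((hg t ht).continuousWithinAt.sub
        ((continuous_const.mul continuous_id).continuousWithinAt))
    · rw [interior_Icc]
      intro t ht
      have hDA : HasDerivAt (fun s => F (γ s)) (∑ i, gradF (γ t) i * (w i - x i)) t :=
        (hg t (Set.mem_Icc_of_Ioo ht)).hasDerivAt (Icc_mem_nhds ht.1 ht.2)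
      exact (hDA.sub ((hasDerivAt_id t).const_mul C)).differentiableAt.differentiableWithinAt
    · rw [interior_Icc]
      intro t ht
      have hDA : HasDerivAt ψ (∑ i, gradF (γ t) i * (w i - x i) - C * 1) t := by
        exact (hg t (Set.mem_Icc_of_Ioo ht)).hasDerivAt (Icc_mem_nhds ht.1 ht.2) |>.sub
          ((hasDerivAt_id t).const_mul C)
      rw [hDA.deriv]
      have := hφ t ⟨le_of_lt ht.1, ht.2⟩
      simp only [mul_one]
      linarith
  have h01 := hant (Set.left_mem_Icc.2 zero_le_one) (Set.right_mem_Icc.2 zero_le_one) zero_le_one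
  have hγ0 : γ 0 = x := by simp [hγ]
  have hγ1 : γ 1 = w := by simp [hγ]
  simp only [hψ, hγ0, hγ1, mul_zero, mul_one, sub_zero] at h01
  linarith


/-- If `F : [0,1]^n → ℝ` is differentiable and DR-submodular, then for all
`x, y ∈ [0,1]^n`, `⟨∇F(x), y - x⟩ ≥ F(x ∨ y) + F(x ∧ y) - 2 F(x)`. -/
theorem drSubmodular_gradient_inequality
    (n : ℕ) (F : (Fin n → ℝ) → ℝ) (gradF : (Fin n → ℝ) → Fin n → ℝ)
    (hgrad : HasGradientOnBox F gradF)
    (hDR : DRSubmodular F) :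
    ∀ x ∈ Set.Icc (0 : Fin n → ℝ) 1, ∀ y ∈ Set.Icc (0 : Fin n → ℝ) 1,
      ∑ i, gradF x i * (y i - x i) ≥ F (x ⊔ y) + F (x ⊓ y) - 2 * F x := by

  intro x hx y hy
  set w₁ : Fin n → ℝ := x ⊔ y with hw₁def
  set w₂ : Fin n → ℝ := x ⊓ y with hw₂def
  have hw₁ : w₁ ∈ Set.Icc (0 : Fin n → ℝ) 1 := ⟨hx.1.trans le_sup_left, sup_le hx.2 hy.2⟩
  have hw₂ : w₂ ∈ Set.Icc (0 : Fin n → ℝ) 1 := ⟨le_inf hx.1 hy.1, inf_le_left.trans hx.2⟩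
  have hxw₁ : x ≤ w₁ := le_sup_left
  have hw₂x : w₂ ≤ x := inf_le_left
  have B1 : F w₁ - F x ≤ ∑ i, gradF x i * (w₁ i - x i) := by
    apply seg_bound hgrad hx hw₁
    intro t ht
    apply Finset.sum_le_sum
    intro i _
    rcases eq_or_lt_of_le (hxw₁ i) with h | h
    · rw [← h]; simp
    · have hmem : x + t • (w₁ - x) ∈ Set.Icc (0 : Fin n → ℝ) 1 :=
        seg_mem_box hx hw₁ ⟨ht.1, le_of_lt ht.2⟩
      have hle : x ≤ x + t • (w₁ - x) := by
        intro j
        simp only [Pi.add_apply, Pi.smul_apply, Pi.sub_apply, smul_eq_mul]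
        nlinarith [hxw₁ j, ht.1]
      have hlt1 : (x + t • (w₁ - x)) i < 1 := by
        have h1 : w₁ i ≤ 1 := by simpa using hw₁.2 i
        simp only [Pi.add_apply, Pi.smul_apply, Pi.sub_apply, smul_eq_mul]
        nlinarith [ht.1, ht.2]
      have := grad_antitone hgrad hDR hx hmem hle i (Or.inl hlt1)
      exact mul_le_mul_of_nonneg_right this (by linarith)
  have B2 : F w₂ - F x ≤ ∑ i, gradF x i * (w₂ i - x i) := by
    apply seg_bound hgrad hx hw₂
    intro t ht
    apply Finset.sum_le_sum
    intro i _
    rcases eq_or_lt_of_le (hw₂x i) with h | h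
    · rw [h]; simp
    · have hmem : x + t • (w₂ - x) ∈ Set.Icc (0 : Fin n → ℝ) 1 :=
        seg_mem_box hx hw₂ ⟨ht.1, le_of_lt ht.2⟩
      have hle : x + t • (w₂ - x) ≤ x := by
        intro j
        simp only [Pi.add_apply, Pi.smul_apply, Pi.sub_apply, smul_eq_mul]
        nlinarith [hw₂x j, ht.1]
      have hpos : 0 < (x + t • (w₂ - x)) i := by
        have h0 : (0:ℝ) ≤ w₂ i := by simpa using hw₂.1 i
        simp only [Pi.add_apply, Pi.smul_apply, Pi.sub_apply, smul_eq_mul]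
        nlinarith [ht.1, ht.2]
      have := grad_antitone hgrad hDR hmem hx hle i (Or.inr hpos)
      exact mul_le_mul_of_nonpos_right this (by linarith)
  have hsum : ∀ i, (w₁ i - x i) + (w₂ i - x i) = y i - x i := by
    intro i
    have := max_add_min (x i) (y i)
    simp only [hw₁def, hw₂def, Pi.sup_apply, Pi.inf_apply]
    linarith
  have hsplit : ∑ i, gradF x i * (y i - x i) =
      (∑ i, gradF x i * (w₁ i - x i)) + ∑ i, gradF x i * (w₂ i - x i) := by
    rw [← Finset.sum_add_distrib]
    apply Finset.sum_congr rfl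
    intro i _
    rw [← hsum i]
    ring
  rw [ge_iff_le, hsplit]
  linarith
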